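/- An N×N Hermitian complex matrix A whose entries all have modulus 0 or 1 and whose principal minors of size at most 3 are all non-negative is positive semidefinite. -/

import Mathlib

open Matrix
open scoped ComplexOrder

/-- A Hermitian matrix is `k`-PMP if all its principal minors of size at most `k`
are non-negative (in the partial order on `ℂ`, i.e. real and non-negative). -/
def kPMP {N : ℕ} (k : ℕ) (A : Matrix (Fin N) (Fin N) ℂ) : Prop :=
  ∀ S : Finset (Fin N), S.card ≤ k →
    0 ≤ (A.submatrix (fun i : S => (i : Fin N)) (fun i : S => (i : Fin N))).det

namespace PMPAux

lemma minor_nonneg {N k : ℕ} {A : Matrix (Fin N) (Fin N) ℂ} (h : kPMP k A) {m : ℕ} (hm : m ≤ k)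
    (f : Fin m → Fin N) (hf : Function.Injective f) :
    0 ≤ (A.submatrix f f).det := by
  set S : Finset (Fin N) := Finset.univ.image f with hS
  have hcard : S.card = m := by
    rw [hS, Finset.card_image_of_injective _ hf, Finset.card_univ, Fintype.card_fin]
  have hmem : ∀ a, f a ∈ S := fun a => Finset.mem_image_of_mem f (Finset.mem_univ a)
  let g : Fin m → S := fun a => ⟨f a, hmem a⟩
  have hgbij : Function.Bijective g :=
    (Fintype.bijective_iff_injective_and_card g).mpr
      ⟨fun a b hab => hf (congrArg Subtype.val hab), by simp [Fintype.card_coe, hcard]⟩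
  let e := Equiv.ofBijective g hgbij
  have heq : A.submatrix f f =
      (A.submatrix (fun i : S => (i : Fin N)) (fun i : S => (i : Fin N))).submatrix e e := by
    ext a b
    simp [Matrix.submatrix_apply, e, Equiv.ofBijective_apply, g]
  rw [heq, Matrix.det_submatrix_equiv_self]
  exact h S (hcard ▸ hm)

lemma key_lemma (a b u : ℂ) (ha : ‖a‖ = 1) (hb : ‖b‖ = 1)
    (hd : 0 ≤ a * b * starRingEnd ℂ u + u * (starRingEnd ℂ a * starRingEnd ℂ b)
          - u * starRingEnd ℂ u - 1) : u = a * b := by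
  set v := a * b * starRingEnd ℂ u with hvdef
  have hcv : starRingEnd ℂ v = u * (starRingEnd ℂ a * starRingEnd ℂ b) := by
    simp [hvdef, _root_.map_mul]; ring
  rw [← hcv, Complex.mul_conj] at hd
  have hre := (Complex.nonneg_iff.mp hd).1
  simp only [Complex.sub_re, Complex.add_re, Complex.conj_re, Complex.ofReal_re,
    Complex.one_re] at hre
  have hvabs : ‖v‖ = ‖u‖ := by
    simp [hvdef, _root_.map_mul, ha, hb]
  have hrele : v.re ≤ ‖v‖ := Complex.re_le_norm v
  have hnsq : Complex.normSq u = (‖u‖) ^ 2 := (Complex.sq_norm u).symm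
  have hr0 : 0 ≤ ‖u‖ := norm_nonneg u
  have hr1 : ‖u‖ = 1 := by nlinarith [hre, hrele, hvabs, hnsq]
  have hvre : v.re = 1 := by nlinarith [hre, hrele, hvabs, hnsq]
  have hvim : v.im = 0 := by
    have h1 : Complex.normSq v = 1 := by
      rw [← Complex.sq_norm, hvabs, hr1]; norm_num
    have h2 : v.re ^ 2 + v.im ^ 2 = 1 := by
      rw [← h1, Complex.normSq_apply]; ring
    nlinarith [h2, hvre]
  have hv1 : v = 1 := Complex.ext (by simp [hvre]) (by simp [hvim])
  have hu1 : u * starRingEnd ℂ u = 1 := by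
    rw [Complex.mul_conj, hnsq, hr1]; norm_num
  have := hvdef ▸ hv1
  calc u = a * b * starRingEnd ℂ u * u := by rw [this, one_mul]
    _ = a * b * (u * starRingEnd ℂ u) := by ring
    _ = a * b := by rw [hu1, mul_one]

variable {N : ℕ} {A : Matrix (Fin N) (Fin N) ℂ}

lemma herm (hA : A.IsHermitian) (i j : Fin N) : A j i = starRingEnd ℂ (A i j) :=
  (hA.apply j i).symm

lemma diag01 (hA : A.IsHermitian) (h01 : ∀ i j, ‖A i j‖ = 0 ∨ ‖A i j‖ = 1)
    (h3 : kPMP 3 A) (i : Fin N) : A i i = 0 ∨ A i i = 1 := by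
  have h1 : 0 ≤ A i i := by
    have := minor_nonneg h3 (by norm_num : 1 ≤ 3) ![i] (fun a b _ => Subsingleton.elim a b)
    rw [Matrix.det_fin_one] at this
    simpa using this
  rw [Complex.nonneg_iff] at h1
  rcases h01 i i with h | h
  · left; exact norm_eq_zero.mp h
  · right
    have : A i i = (A i i).re := by
      apply Complex.ext <;> simp [h1.2.symm]
    rw [this] at h ⊢
    rw [Complex.norm_real, Real.norm_eq_abs, _root_.abs_of_nonneg h1.1] at h
    rw [h]; norm_num

lemma row_zero (hA : A.IsHermitian) (h3 : kPMP 3 A) {i : Fin N} (hi : A i i = 0) (j : Fin N) :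
    A i j = 0 := by
  rcases eq_or_ne i j with rfl | hij
  · exact hi
  · have h2 := minor_nonneg h3 (by norm_num : 2 ≤ 3) ![i, j]
      (by intro a b hab; fin_cases a <;> fin_cases b <;> simp_all)
    rw [Matrix.det_fin_two] at h2
    simp only [Matrix.submatrix_apply, Matrix.cons_val_zero, Matrix.cons_val_one,
      Matrix.head_cons] at h2
    rw [hi, herm hA i j, zero_mul, zero_sub, Complex.mul_conj, Complex.nonneg_iff] at h2
    have := h2.1
    simp only [Complex.neg_re, Complex.ofReal_re] at this
    have : Complex.normSq (A i j) = 0 := le_antisymm (by linarith) (Complex.normSq_nonneg _)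
    exact Complex.normSq_eq_zero.mp this

section
variable (hA : A.IsHermitian) (h01 : ∀ i j, ‖A i j‖ = 0 ∨ ‖A i j‖ = 1)
  (h3 : kPMP 3 A)
include hA h01 h3

omit hA h3 in
lemma entryAbsOne {i j : Fin N} (h : A i j ≠ 0) : ‖A i j‖ = 1 :=
  (h01 i j).resolve_left (fun h0 => h (norm_eq_zero.mp h0))

lemma diag_one {i j : Fin N} (h : A i j ≠ 0) : A i i = 1 := by
  rcases diag01 hA h01 h3 i with h0 | h1
  · exact absurd (row_zero hA h3 h0 j) h
  · exact h1

lemma trans_mul {i j k : Fin N} (hij : A i j ≠ 0) (hjk : A j k ≠ 0) :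
    A i k = A i j * A j k := by
  have hji : A j i ≠ 0 := by rw [herm hA i j]; simpa using hij
  have hii : A i i = 1 := diag_one hA h01 h3 hij
  have hjj : A j j = 1 := diag_one hA h01 h3 hjk
  have hkj : A k j ≠ 0 := by rw [herm hA j k]; simpa using hjk
  have hkk : A k k = 1 := diag_one hA h01 h3 hkj
  rcases eq_or_ne i j with rfl | hij'
  · rw [hii, one_mul]
  rcases eq_or_ne j k with rfl | hjk'
  · rw [hjj, mul_one]
  rcases eq_or_ne i k with rfl | hik'
  · rw [hii, herm hA i j, Complex.mul_conj, ← Complex.sq_norm,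
      entryAbsOne h01 hij]
    norm_num
  have hf : Function.Injective ![i, j, k] := by
    intro a b hab
    fin_cases a <;> fin_cases b <;> simp_all
  have hd := minor_nonneg h3 (by norm_num : 3 ≤ 3) ![i, j, k] hf
  rw [Matrix.det_fin_three] at hd
  simp only [Matrix.submatrix_apply, Matrix.cons_val_zero, Matrix.cons_val_one,
    Matrix.head_cons, Matrix.cons_val_two, Matrix.tail_cons, Matrix.head_fin_const] at hd
  rw [hii, hjj, hkk, herm hA i j, herm hA j k, herm hA i k] at hd
  have ha2 : A i j * starRingEnd ℂ (A i j) = 1 := by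
    rw [Complex.mul_conj, ← Complex.sq_norm, entryAbsOne h01 hij]; norm_num
  have hb2 : A j k * starRingEnd ℂ (A j k) = 1 := by
    rw [Complex.mul_conj, ← Complex.sq_norm, entryAbsOne h01 hjk]; norm_num
  have hd2 : 0 ≤ A i j * A j k * starRingEnd ℂ (A i k)
      + A i k * (starRingEnd ℂ (A i j) * starRingEnd ℂ (A j k))
      - A i k * starRingEnd ℂ (A i k) - 1 :=
    le_of_le_of_eq hd (by linear_combination -ha2 - hb2)
  exact key_lemma _ _ _ (entryAbsOne h01 hij) (entryAbsOne h01 hjk) hd2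

/-- number of nonzero entries in row `i` -/
noncomputable def nn (A : Matrix (Fin N) (Fin N) ℂ) (i : Fin N) : ℕ :=
  (Finset.univ.filter (fun l => A i l ≠ 0)).card

lemma symm_ne {i j : Fin N} (h : A i j ≠ 0) : A j i ≠ 0 := by
  rw [herm hA i j]; simpa using h

lemma class_eq {i j : Fin N} (h : A i j ≠ 0) : nn A i = nn A j := by
  unfold nn
  congr 1
  apply Finset.filter_congr
  intro l _
  constructor
  · intro hil
    have := trans_mul hA h01 h3 (symm_ne hA h01 h3 h) hil
    simp only [ne_eq, this]
    exact mul_ne_zero (symm_ne hA h01 h3 h) hil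
  · intro hjl
    have := trans_mul hA h01 h3 h hjl
    simp only [ne_eq, this]
    exact mul_ne_zero h hjl

lemma key_sum (j k : Fin N) :
    ∑ i, A j i * A i k / (nn A i : ℂ) = A j k := by
  by_cases hjk : A j k = 0
  · rw [hjk]
    apply Finset.sum_eq_zero
    intro i _
    by_cases h1 : A j i = 0
    · simp [h1]
    by_cases h2 : A i k = 0
    · simp [h2]
    exact absurd (trans_mul hA h01 h3 h1 h2 ▸ mul_ne_zero h1 h2) (fun h => h hjk)
  · set C : Finset (Fin N) := Finset.univ.filter (fun i => A j i ≠ 0) with hC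
    have hjj : A j j = 1 := diag_one hA h01 h3 hjk
    have hjC : j ∈ C := by simp [hC, hjj]
    have hcardC : C.card = nn A j := rfl
    have hnnj : (nn A j : ℂ) ≠ 0 := by
      have : 0 < C.card := Finset.card_pos.mpr ⟨j, hjC⟩
      rw [hcardC] at this
      exact_mod_cast this.ne'
    calc ∑ i, A j i * A i k / (nn A i : ℂ)
        = ∑ i ∈ C, A j i * A i k / (nn A i : ℂ) := by
          refine (Finset.sum_subset (Finset.filter_subset _ _) fun i _ hiC => ?_).symm
          have : A j i = 0 := by
            by_contra h
            exact hiC (by simp [hC, h])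
          simp [this]
      _ = ∑ _i ∈ C, A j k / (nn A j : ℂ) := by
          refine Finset.sum_congr rfl fun i hiC => ?_
          have hji : A j i ≠ 0 := by
            simp only [hC, Finset.mem_filter] at hiC
            exact hiC.2
          have hijne : A i j ≠ 0 := symm_ne hA h01 h3 hji
          have hik : A i k ≠ 0 := by
            rw [trans_mul hA h01 h3 hijne hjk]
            exact mul_ne_zero hijne hjk
          have hval : A j i * A i k = A j k := (trans_mul hA h01 h3 hji hik).symm
          have hni : nn A i = nn A j := class_eq hA h01 h3 hijne
          rw [hval, hni]
      _ = (C.card : ℂ) * (A j k / (nn A j : ℂ)) := by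
          rw [Finset.sum_const, nsmul_eq_mul]
      _ = A j k := by
          rw [hcardC]
          field_simp
end

end PMPAux

/-- An `N × N` Hermitian matrix whose entries all have modulus `0` or `1`, and
all of whose principal minors of size at most `3` are non-negative, is
positive semidefinite. -/
theorem stmt0 {N : ℕ} (A : Matrix (Fin N) (Fin N) ℂ) (hA : A.IsHermitian)
    (h01 : ∀ i j, ‖A i j‖ = 0 ∨ ‖A i j‖ = 1)
    (h3 : kPMP 3 A) : A.PosSemidef := by
  open PMPAux in
  refine Matrix.PosSemidef.of_dotProduct_mulVec_nonneg hA fun x => ?_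
  set w : Fin N → ℂ := fun i => ∑ k, A i k * x k with hw
  have hmain : star x ⬝ᵥ A.mulVec x
      = ∑ i, ((PMPAux.nn A i : ℂ))⁻¹ * (starRingEnd ℂ (w i) * w i) := by
    have hw' : ∀ i, starRingEnd ℂ (w i) = ∑ j, A j i * starRingEnd ℂ (x j) := by
      intro i
      rw [hw]
      simp only [map_sum, _root_.map_mul]
      refine Finset.sum_congr rfl fun j _ => ?_
      rw [← PMPAux.herm hA i j]
    calc star x ⬝ᵥ A.mulVec x
        = ∑ j, ∑ k, starRingEnd ℂ (x j) * (A j k * x k) := by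
          simp [dotProduct, mulVec, Finset.mul_sum, Complex.star_def]
      _ = ∑ j, ∑ k, starRingEnd ℂ (x j) * ((∑ i, A j i * A i k / (PMPAux.nn A i : ℂ)) * x k) := by
          refine Finset.sum_congr rfl fun j _ => Finset.sum_congr rfl fun k _ => ?_
          rw [PMPAux.key_sum hA h01 h3 j k]
      _ = ∑ i, ((PMPAux.nn A i : ℂ))⁻¹ *
            ((∑ j, A j i * starRingEnd ℂ (x j)) * (∑ k, A i k * x k)) := by
          have swap3 : ∀ f : Fin N → Fin N → Fin N → ℂ,
              ∑ j, ∑ k, ∑ i, f j k i = ∑ i, ∑ j, ∑ k, f j k i := fun f =>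
            (Finset.sum_congr rfl (fun j _ => Finset.sum_comm)).trans Finset.sum_comm
          calc ∑ j, ∑ k, starRingEnd ℂ (x j) *
                ((∑ i, A j i * A i k / (PMPAux.nn A i : ℂ)) * x k)
              = ∑ j, ∑ k, ∑ i, starRingEnd ℂ (x j) *
                  (A j i * A i k / (PMPAux.nn A i : ℂ) * x k) := by
                refine Finset.sum_congr rfl fun j _ => Finset.sum_congr rfl fun k _ => ?_
                rw [Finset.sum_mul, Finset.mul_sum]
            _ = ∑ i, ∑ j, ∑ k, starRingEnd ℂ (x j) *
                  (A j i * A i k / (PMPAux.nn A i : ℂ) * x k) := swap3 _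
            _ = ∑ i, ((PMPAux.nn A i : ℂ))⁻¹ *
                  ((∑ j, A j i * starRingEnd ℂ (x j)) * (∑ k, A i k * x k)) := by
                refine Finset.sum_congr rfl fun i _ => ?_
                rw [Finset.sum_mul_sum, Finset.mul_sum]
                refine Finset.sum_congr rfl fun j _ => ?_
                rw [Finset.mul_sum]
                refine Finset.sum_congr rfl fun k _ => ?_
                ring
      _ = ∑ i, ((PMPAux.nn A i : ℂ))⁻¹ * (starRingEnd ℂ (w i) * w i) := by
          refine Finset.sum_congr rfl fun i _ => ?_
          rw [hw', hw]
  rw [hmain]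
  apply Finset.sum_nonneg
  intro i _
  apply mul_nonneg
  · rw [show ((PMPAux.nn A i : ℂ)) = ((PMPAux.nn A i : ℝ) : ℂ) by push_cast; ring,
      ← Complex.ofReal_inv]
    exact Complex.zero_le_real.mpr (inv_nonneg.mpr (Nat.cast_nonneg _))
  · exact star_mul_self_nonneg (w i)
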